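/- Let G=(V,E) be a graph with nonnegative edge weights p, vertex groups V_1,…,V_ω partitioning V, and requirements ρ_g ≤ |V_g|. Construct H by adding, for each g, a set V'_g of |V_g|−ρ_g new vertices, each joined to every vertex of V_g by an edge of weight M, and setting the weight of each original edge e to 2M−p_e, where M > ∑_e p_e. If M* is a matching in G that matches at least ρ_g vertices in each V_g, then M* extends to a matching M*_H in H that matches every vertex of V, with total H-weight equal to nM − ∑_{e∈M*} p_e, where n = |V|. -/

import Mathlib

open Finset

/-- A matching in a graph given by its edge set `EX`: a subset of edges, pairwise
vertex-disjoint. -/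
def IsMatching {X : Type*} (EX M : Finset (Sym2 X)) : Prop :=
  M ⊆ EX ∧ ∀ e ∈ M, ∀ e' ∈ M, e ≠ e' → ∀ x : X, ¬(x ∈ e ∧ x ∈ e')

open scoped Classical in
/-- in the construction of `H` from `G` (auxiliary vertices `V'_g` of size
`|V_g| − ρ_g` joined to all of `V_g` by weight-`M` edges, original edges reweighted to
`2M − p_e`, with `M > ∑_e p_e`), any matching `M*` of `G` matching at least `ρ_g`
vertices of each group `V_g` extends to a matching of `H` matching every vertex of `V`
whose total `H`-weight is `n·M − ∑_{e∈M*} p_e`. -/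
theorem budgeted_matching_extension
    {V A : Type*} [Fintype V] [Fintype A] [DecidableEq V] [DecidableEq A]
    (ω : ℕ) (part : V → Fin ω) (grp : A → Fin ω) (ρ : Fin ω → ℕ)
    (hρ : ∀ g, ρ g ≤ (univ.filter fun v => part v = g).card)
    (haux : ∀ g, (univ.filter fun a => grp a = g).card
        = (univ.filter fun v => part v = g).card - ρ g)
    (EG : Finset (Sym2 V)) (hEGsimple : ∀ e ∈ EG, ¬ e.IsDiag)
    (p : Sym2 V → ℝ) (hp : ∀ e, 0 ≤ p e)
    (M : ℝ) (hM : ∑ e ∈ EG, p e < M)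
    (EH : Finset (Sym2 (V ⊕ A)))
    (hEH : ∀ e : Sym2 (V ⊕ A), e ∈ EH ↔
      (∃ e0 ∈ EG, e = e0.map Sum.inl) ∨
      (∃ (v : V) (a : A), part v = grp a ∧ e = s(Sum.inl v, Sum.inr a)))
    (wH : Sym2 (V ⊕ A) → ℝ)
    (hwH1 : ∀ e0 ∈ EG, wH (e0.map Sum.inl) = 2 * M - p e0)
    (hwH2 : ∀ (v : V) (a : A), wH s(Sum.inl v, Sum.inr a) = M)
    (Mstar : Finset (Sym2 V)) (hMstar : IsMatching EG Mstar)
    (hcov : ∀ g, ρ g ≤ (univ.filter fun v => part v = g ∧ ∃ e ∈ Mstar, v ∈ e).card) :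
    ∃ MH : Finset (Sym2 (V ⊕ A)),
      IsMatching EH MH ∧
      Mstar.image (Sym2.map Sum.inl) ⊆ MH ∧
      (∀ v : V, ∃ e ∈ MH, (Sum.inl v : V ⊕ A) ∈ e) ∧
      ∑ e ∈ MH, wH e = (Fintype.card V : ℝ) * M - ∑ e ∈ Mstar, p e := by
  classical
  -- the set of unmatched vertices
  set cov : V → Prop := fun v => ∃ e ∈ Mstar, v ∈ e with hcovdef
  set U : Finset V := univ.filter (fun v => ¬ cov v) with hUdef
  -- per-group cardinality bound for unmatched vertices
  have hcard : ∀ g : Fin ω, (U.filter (fun v => part v = g)).card ≤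
      (univ.filter fun a => grp a = g).card := by
    intro g
    have hsplit : (univ.filter (fun v : V => part v = g ∧ cov v)).card +
        (univ.filter (fun v : V => part v = g ∧ ¬ cov v)).card
        = (univ.filter fun v : V => part v = g).card := by
      rw [← Finset.filter_filter, ← Finset.filter_filter]
      exact Finset.card_filter_add_card_filter_not _
    have hUg : U.filter (fun v => part v = g)
        = univ.filter (fun v : V => part v = g ∧ ¬ cov v) := by
      rw [hUdef, Finset.filter_filter]
      apply Finset.filter_congr
      intro v _
      constructor <;> (intro h; exact ⟨h.2, h.1⟩)
    have hρc : ρ g ≤ (univ.filter (fun v : V => part v = g ∧ cov v)).card := hcov g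
    rw [hUg, haux g]
    omega
  -- an injection from the unmatched vertices into the auxiliary vertices,
  -- respecting groups
  have hfex : ∃ F : {x // x ∈ U} → A,
      (∀ v, grp (F v) = part v.1) ∧ Function.Injective F := by
    cases isEmpty_or_nonempty A with
    | inl hA =>
      have hUe : U = ∅ := by
        by_contra h
        obtain ⟨v, hv⟩ := Finset.nonempty_iff_ne_empty.2 h
        have h1 : 0 < (U.filter (fun x => part x = part v)).card :=
          Finset.card_pos.2 ⟨v, Finset.mem_filter.2 ⟨hv, rfl⟩⟩
        have h2 := hcard (part v)
        have h3 : (univ.filter fun a : A => grp a = part v) = ∅ :=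
          Finset.eq_empty_of_isEmpty _
        rw [h3, Finset.card_empty] at h2
        omega
      refine ⟨fun v => absurd v.2 (by simp [hUe]), fun v => absurd v.2 (by simp [hUe]),
        fun v => absurd v.2 (by simp [hUe])⟩
    | inr hA =>
      have hfg : ∀ g : Fin ω, ∃ f : V → A,
          Set.MapsTo f (↑(U.filter (fun v => part v = g)) : Set V)
            (↑(univ.filter fun a : A => grp a = g) : Set A) ∧
          Set.InjOn f (↑(U.filter (fun v => part v = g)) : Set V) := by
        intro g
        refine (Set.Finite.exists_injOn_of_encard_le (Set.toFinite _)
          (t := (↑(univ.filter fun a : A => grp a = g) : Set A)) ?_).imp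
          fun f hf => ⟨fun x hx => hf.1 hx, hf.2⟩
        calc (↑(U.filter (fun v => part v = g)) : Set V).encard
            = ((U.filter (fun v => part v = g)).card : ℕ∞) :=
              Set.encard_coe_eq_coe_finsetCard _
          _ ≤ (((univ.filter fun a : A => grp a = g)).card : ℕ∞) := by
              exact_mod_cast hcard g
          _ = (↑(univ.filter fun a : A => grp a = g) : Set A).encard :=
              (Set.encard_coe_eq_coe_finsetCard _).symm
      choose fg hfg1 hfg2 using hfg
      refine ⟨fun v => fg (part v.1) v.1, ?_, ?_⟩
      · intro v
        have hv : (v : V) ∈ (U.filter (fun x => part x = part v.1) : Finset V) :=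
          Finset.mem_filter.2 ⟨v.2, rfl⟩
        have := hfg1 (part v.1) hv
        simpa using this
      · intro v w h
        have hgv : grp (fg (part v.1) v.1) = part v.1 := by
          have hv : (v : V) ∈ (U.filter (fun x => part x = part v.1) : Finset V) :=
            Finset.mem_filter.2 ⟨v.2, rfl⟩
          simpa using hfg1 (part v.1) hv
        have hgw : grp (fg (part w.1) w.1) = part w.1 := by
          have hw : (w : V) ∈ (U.filter (fun x => part x = part w.1) : Finset V) :=
            Finset.mem_filter.2 ⟨w.2, rfl⟩
          simpa using hfg1 (part w.1) hw
        have h' : fg (part v.1) v.1 = fg (part w.1) w.1 := h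
        have hg : part v.1 = part w.1 := by
          rw [← hgv, ← hgw, h']
        apply Subtype.ext
        refine hfg2 (part v.1) (Finset.mem_filter.2 ⟨v.2, rfl⟩)
          (Finset.mem_filter.2 ⟨w.2, hg.symm⟩) ?_
        rw [h', hg]
  obtain ⟨f, hfgrp, hfinj⟩ := hfex
  -- the matching in H
  set S : Finset (Sym2 (V ⊕ A)) := Mstar.image (Sym2.map Sum.inl) with hSdef
  set T : Finset (Sym2 (V ⊕ A)) :=
    U.attach.image (fun v => s(Sum.inl v.1, Sum.inr (f v))) with hTdef
  have hinlinj : Function.Injective (Sym2.map (Sum.inl : V → V ⊕ A)) :=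
    Sym2.map.injective Sum.inl_injective
  have hTinj : ∀ v w : {x // x ∈ U},
      s(Sum.inl v.1, (Sum.inr (f v) : V ⊕ A)) = s(Sum.inl w.1, Sum.inr (f w)) → v = w := by
    intro v w h
    rw [Sym2.eq_iff] at h
    rcases h with ⟨h1, _⟩ | ⟨h1, _⟩
    · exact Subtype.ext (Sum.inl.inj h1)
    · exact absurd h1 (by simp)
  have hST : Disjoint S T := by
    rw [Finset.disjoint_left]
    intro e heS heT
    obtain ⟨e0, he0, rfl⟩ := Finset.mem_image.1 heS
    obtain ⟨v, _, hv⟩ := Finset.mem_image.1 heT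
    have : (Sum.inr (f v) : V ⊕ A) ∈ Sym2.map Sum.inl e0 := by
      rw [← hv]; simp
    rw [Sym2.mem_map] at this
    obtain ⟨y, _, hy⟩ := this
    exact absurd hy (by simp)
  refine ⟨S ∪ T, ⟨?_, ?_⟩, Finset.subset_union_left, ?_, ?_⟩
  · -- MH ⊆ EH
    intro e he
    rcases Finset.mem_union.1 he with h | h
    · obtain ⟨e0, he0, rfl⟩ := Finset.mem_image.1 h
      exact (hEH _).2 (Or.inl ⟨e0, hMstar.1 he0, rfl⟩)
    · obtain ⟨v, _, rfl⟩ := Finset.mem_image.1 h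
      exact (hEH _).2 (Or.inr ⟨v.1, f v, (hfgrp v).symm, rfl⟩)
  · -- pairwise disjointness
    intro e he e' he' hne x ⟨hx, hx'⟩
    have key : ∀ y : {x // x ∈ U}, ∀ e0 ∈ Mstar, ¬ y.1 ∈ e0 := by
      intro y e0 he0 hy
      have : cov y.1 := ⟨e0, he0, hy⟩
      have := (Finset.mem_filter.1 y.2).2
      exact this ‹cov y.1›
    rcases Finset.mem_union.1 he with h | h <;> rcases Finset.mem_union.1 he' with h' | h'
    · obtain ⟨a, ha, rfl⟩ := Finset.mem_image.1 h
      obtain ⟨b, hb, rfl⟩ := Finset.mem_image.1 h'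
      have hab : a ≠ b := fun hh => hne (by rw [hh])
      rw [Sym2.mem_map] at hx hx'
      obtain ⟨y, hy, rfl⟩ := hx
      obtain ⟨y', hy', hyy⟩ := hx'
      have : y' = y := Sum.inl.inj hyy
      subst this
      exact hMstar.2 a ha b hb hab y' ⟨hy, hy'⟩
    · obtain ⟨a, ha, rfl⟩ := Finset.mem_image.1 h
      obtain ⟨v, _, rfl⟩ := Finset.mem_image.1 h'
      rw [Sym2.mem_map] at hx
      obtain ⟨y, hy, rfl⟩ := hx
      rw [Sym2.mem_iff] at hx'
      rcases hx' with hh | hh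
      · have : y = v.1 := Sum.inl.inj hh
        subst this
        exact key v a ha hy
      · exact absurd hh (by simp)
    · obtain ⟨v, _, rfl⟩ := Finset.mem_image.1 h
      obtain ⟨a, ha, rfl⟩ := Finset.mem_image.1 h'
      rw [Sym2.mem_map] at hx'
      obtain ⟨y, hy, hyx⟩ := hx'
      rw [Sym2.mem_iff] at hx
      rcases hx with hh | hh
      · have hyv : y = v.1 := Sum.inl.inj (by rw [hyx, hh])
        subst hyv
        exact key v a ha hy
      · rw [hh] at hyx
        exact absurd hyx (by simp)
    · obtain ⟨v, _, rfl⟩ := Finset.mem_image.1 h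
      obtain ⟨w, _, rfl⟩ := Finset.mem_image.1 h'
      have hvw : v ≠ w := fun hh => hne (by rw [hh])
      rw [Sym2.mem_iff] at hx hx'
      rcases hx with hh | hh <;> rcases hx' with hh' | hh'
      · exact hvw (Subtype.ext (Sum.inl.inj (hh.symm.trans hh')))
      · exact absurd (hh.symm.trans hh') (by simp)
      · exact absurd (hh.symm.trans hh') (by simp)
      · exact hvw (hfinj (Sum.inr.inj (hh.symm.trans hh')))
  · -- every v ∈ V is matched
    intro v
    by_cases hv : cov v
    · obtain ⟨e0, he0, hve⟩ := hv
      refine ⟨Sym2.map Sum.inl e0, Finset.mem_union.2 (Or.inl ?_), ?_⟩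
      · exact Finset.mem_image.2 ⟨e0, he0, rfl⟩
      · rw [Sym2.mem_map]; exact ⟨v, hve, rfl⟩
    · have hvU : v ∈ U := Finset.mem_filter.2 ⟨Finset.mem_univ v, hv⟩
      refine ⟨s(Sum.inl v, Sum.inr (f ⟨v, hvU⟩)), Finset.mem_union.2 (Or.inr ?_), ?_⟩
      · exact Finset.mem_image.2 ⟨⟨v, hvU⟩, Finset.mem_attach _ _, rfl⟩
      · simp
  · -- the weight computation
    rw [Finset.sum_union hST]
    have hsumS : ∑ e ∈ S, wH e = 2 * Mstar.card * M - ∑ e ∈ Mstar, p e := by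
      rw [hSdef, Finset.sum_image (fun a _ b _ h => hinlinj h)]
      rw [Finset.sum_congr rfl (fun e he => hwH1 e (hMstar.1 he))]
      rw [Finset.sum_sub_distrib, Finset.sum_const, nsmul_eq_mul]
      ring
    have hsumT : ∑ e ∈ T, wH e = U.card * M := by
      rw [hTdef, Finset.sum_image (fun a _ b _ h => hTinj a b h)]
      rw [Finset.sum_congr rfl (fun v _ => hwH2 v.1 (f v))]
      rw [Finset.sum_const, Finset.card_attach, nsmul_eq_mul]
    -- count covered vertices: 2 * |Mstar|
    have hCcard : (univ.filter (fun v : V => cov v)).card = 2 * Mstar.card := by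
      have hbi : univ.filter (fun v : V => cov v)
          = Mstar.biUnion (fun e => univ.filter (· ∈ e)) := by
        ext v
        simp [hcovdef, Finset.mem_biUnion]
      rw [hbi, Finset.card_biUnion]
      · have : ∀ e ∈ Mstar, (univ.filter (· ∈ e)).card = 2 := by
          intro e he
          induction e with
          | _ a b =>
            have hab : a ≠ b := by
              have := hEGsimple _ (hMstar.1 he)
              simpa [Sym2.mk_isDiag_iff] using this
            have : univ.filter (· ∈ s(a, b)) = {a, b} := by
              ext x; simp [Sym2.mem_iff]
            rw [this, Finset.card_insert_of_notMem (by simpa using hab),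
              Finset.card_singleton]
        rw [Finset.sum_congr rfl this, Finset.sum_const, smul_eq_mul, mul_comm]
      · intro e he e' he' hne
        rw [Function.onFun, Finset.disjoint_left]
        intro x hx hx'
        exact hMstar.2 e he e' he' hne x
          ⟨(Finset.mem_filter.1 hx).2, (Finset.mem_filter.1 hx').2⟩
    have hUcard : U.card + 2 * Mstar.card = Fintype.card V := by
      rw [← hCcard, hUdef]
      rw [add_comm]
      rw [Finset.card_filter_add_card_filter_not, Finset.card_univ]
    rw [hsumS, hsumT]
    have hcast : (U.card : ℝ) + 2 * Mstar.card = Fintype.card V := by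
      exact_mod_cast hUcard
    linear_combination M * hcast
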